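/- Let λ ∈ (0,1), and let V_λ, J : Δ(K) × Δ(L) → ℝ be bounded with J ≤ V_λ pointwise. Let Ṽ²_λ, J̃² : Δ(K) × ℝ^{|L|} → ℝ satisfy, for all (p,q): V_λ(p,q) = max_{ν}(Ṽ²_λ(p,ν) − qᵀν) and J(p,q) = max_{ν}(J̃²(p,ν) − qᵀν), with maxima attained. Suppose there exists a bounded function Ṽ²_{λ,T} and a family of operators F̃²_r, each a (1−λ)-contraction in the sup-norm, such that J̃² = F̃²_σ J̃² for some index σ (pointwise, with σ possibly depending on the point), Ṽ²_{λ,T+1} := F̃²_σ Ṽ²_{λ,T} pointwise for the same σ, and ‖Ṽ²_λ − Ṽ²_{λ,T+1}‖_sup ≤ (1−λ)‖Ṽ²_λ − Ṽ²_{λ,T}‖_sup. Then ‖J̃² − Ṽ²_λ‖_sup ≤ (2(1−λ)/λ) ‖Ṽ²_{λ,T} − Ṽ²_λ‖_sup, and consequently ‖J − V_λ‖_sup ≤ (2(1−λ)/λ) ‖Ṽ²_{λ,T} − Ṽ²_λ‖_sup. -/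

import Mathlib

open Finset

/-- abstract Theorem 8: performance bound for the approximated security
strategy derived from the truncated dual value. -/
theorem stmt_8 {K L ι : Type*} [Fintype K] [Fintype L] [Nonempty K] [Nonempty L] [Nonempty ι]
    (lam : ℝ) (hlam : lam ∈ Set.Ioo (0:ℝ) 1)
    (V J : (K → ℝ) → (L → ℝ) → ℝ)
    (hVb : ∃ C : ℝ, ∀ p q, |V p q| ≤ C) (hJb : ∃ C : ℝ, ∀ p q, |J p q| ≤ C)
    (hJV : ∀ p ∈ stdSimplex ℝ K, ∀ q ∈ stdSimplex ℝ L, J p q ≤ V p q)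
    (Vd Jd : (K → ℝ) → (L → ℝ) → ℝ)
    (hVd : ∀ p ∈ stdSimplex ℝ K, ∀ q ∈ stdSimplex ℝ L,
      IsGreatest {x : ℝ | ∃ ν : L → ℝ, x = Vd p ν - ∑ l, q l * ν l} (V p q))
    (hJd : ∀ p ∈ stdSimplex ℝ K, ∀ q ∈ stdSimplex ℝ L,
      IsGreatest {x : ℝ | ∃ ν : L → ℝ, x = Jd p ν - ∑ l, q l * ν l} (J p q))
    (F : ι → ((K → ℝ) → (L → ℝ) → ℝ) → (K → ℝ) → (L → ℝ) → ℝ)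
    (hFcontr : ∀ (r : ι) (W₁ W₂ : (K → ℝ) → (L → ℝ) → ℝ) (D : ℝ),
      (∀ p ∈ stdSimplex ℝ K, ∀ (ν : L → ℝ), |W₁ p ν - W₂ p ν| ≤ D) →
      ∀ p ∈ stdSimplex ℝ K, ∀ (ν : L → ℝ), |F r W₁ p ν - F r W₂ p ν| ≤ (1 - lam) * D)
    (σ : (K → ℝ) → (L → ℝ) → ι)
    (hJfix : ∀ p ∈ stdSimplex ℝ K, ∀ (ν : L → ℝ), Jd p ν = F (σ p ν) Jd p ν)
    (VT VT1 : (K → ℝ) → (L → ℝ) → ℝ)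
    (hVTb : ∃ C : ℝ, ∀ p ∈ stdSimplex ℝ K, ∀ (ν : L → ℝ), |Vd p ν - VT p ν| ≤ C)
    (hJdb : ∃ C : ℝ, ∀ p ∈ stdSimplex ℝ K, ∀ (ν : L → ℝ), |Jd p ν - Vd p ν| ≤ C)
    (hVT1 : ∀ p ∈ stdSimplex ℝ K, ∀ (ν : L → ℝ), VT1 p ν = F (σ p ν) VT p ν)
    (hstep : ∀ D : ℝ, (∀ p ∈ stdSimplex ℝ K, ∀ (ν : L → ℝ), |Vd p ν - VT p ν| ≤ D) →
      ∀ p ∈ stdSimplex ℝ K, ∀ (ν : L → ℝ), |Vd p ν - VT1 p ν| ≤ (1 - lam) * D) :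
    ∀ D : ℝ, (∀ p ∈ stdSimplex ℝ K, ∀ (ν : L → ℝ), |VT p ν - Vd p ν| ≤ D) →
      (∀ p ∈ stdSimplex ℝ K, ∀ (ν : L → ℝ),
        |Jd p ν - Vd p ν| ≤ 2 * (1 - lam) / lam * D) ∧
      (∀ p ∈ stdSimplex ℝ K, ∀ q ∈ stdSimplex ℝ L,
        |J p q - V p q| ≤ 2 * (1 - lam) / lam * D) := by
  obtain ⟨hl0, hl1⟩ := hlam
  intro D hD
  have hpK : (fun _ : K => (Fintype.card K : ℝ)⁻¹) ∈ stdSimplex ℝ K := by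
    constructor
    · intro i; positivity
    · have : (0:ℝ) < Fintype.card K := by
        exact_mod_cast Fintype.card_pos
      field_simp
      rw [Finset.sum_const, Finset.card_univ, nsmul_eq_mul]; exact mul_one_div_cancel this.ne'
  have hD0 : 0 ≤ D := le_trans (abs_nonneg _) (hD _ hpK 0)
  obtain ⟨C0, hC0⟩ := hJdb
  set Cs : ℝ := 2 * (1 - lam) / lam * D with hCs
  have hCs0 : 0 ≤ Cs := by
    apply mul_nonneg _ hD0
    apply div_nonneg _ (le_of_lt hl0)
    linarith
  have key : ∀ n : ℕ, ∀ p ∈ stdSimplex ℝ K, ∀ ν : L → ℝ,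
      |Jd p ν - Vd p ν| ≤ (1 - lam)^n * (C0 - Cs) + Cs := by
    intro n
    induction n with
    | zero =>
      intro p hp ν
      simpa using hC0 p hp ν
    | succ n ih =>
      intro p hp ν
      have hJVT : ∀ p ∈ stdSimplex ℝ K, ∀ ν : L → ℝ,
          |Jd p ν - VT p ν| ≤ ((1 - lam)^n * (C0 - Cs) + Cs) + D := by
        intro p hp ν
        calc |Jd p ν - VT p ν|
            ≤ |Jd p ν - Vd p ν| + |Vd p ν - VT p ν| := abs_sub_le _ _ _
          _ ≤ ((1 - lam)^n * (C0 - Cs) + Cs) + D := by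
              refine add_le_add (ih p hp ν) ?_
              rw [abs_sub_comm]; exact hD p hp ν
      have h1 : |Jd p ν - VT1 p ν| ≤ (1 - lam) * (((1 - lam)^n * (C0 - Cs) + Cs) + D) := by
        have h := hFcontr (σ p ν) Jd VT _ hJVT p hp ν
        rwa [← hJfix p hp ν, ← hVT1 p hp ν] at h
      have h2 : |Vd p ν - VT1 p ν| ≤ (1 - lam) * D := by
        refine hstep D (fun p hp ν => ?_) p hp ν
        rw [abs_sub_comm]; exact hD p hp ν
      have h3 : |Jd p ν - Vd p ν| ≤ |Jd p ν - VT1 p ν| + |Vd p ν - VT1 p ν| := by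
        have := abs_sub_le (Jd p ν) (VT1 p ν) (Vd p ν)
        rwa [abs_sub_comm (VT1 p ν)] at this
      have halg : (1 - lam) * (((1 - lam)^n * (C0 - Cs) + Cs) + D) + (1 - lam) * D
          = (1 - lam)^(n+1) * (C0 - Cs) + Cs := by
        rw [hCs]
        have hne : lam ≠ 0 := ne_of_gt hl0
        field_simp
        ring
      linarith [h1, h2, h3]
  have hlim : ∀ p ∈ stdSimplex ℝ K, ∀ ν : L → ℝ, |Jd p ν - Vd p ν| ≤ Cs := by
    intro p hp ν
    have habs : |1 - lam| < 1 := by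
      rw [abs_lt]; constructor <;> linarith
    have h0 : Filter.Tendsto (fun n : ℕ => (1 - lam)^n * (C0 - Cs) + Cs)
        Filter.atTop (nhds Cs) := by
      have := (tendsto_pow_atTop_nhds_zero_of_abs_lt_one habs).mul_const (C0 - Cs)
      simpa using this.add_const Cs
    exact ge_of_tendsto' h0 (fun n => key n p hp ν)
  refine ⟨hlim, ?_⟩
  intro p hp q hq
  obtain ⟨νV, hνV⟩ := (hVd p hp q hq).1
  have hJge : Jd p νV - ∑ l, q l * νV l ≤ J p q :=
    (hJd p hp q hq).2 ⟨νV, rfl⟩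
  have hJdV : Vd p νV - Cs ≤ Jd p νV := by
    have := hlim p hp νV
    rw [abs_le] at this
    linarith [this.1]
  rw [abs_le]
  constructor
  · have : V p q - Cs ≤ J p q := by
      rw [hνV]; linarith
    linarith
  · have := hJV p hp q hq
    linarith
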